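/- arXiv:1011.5317 — 6 statements merged into one kernel-verified Lean document; each statement's English description precedes it below -/
import Mathlib

section
/- Let Y be a finite nonempty set of schedules, and let w, u : Y → ℝ with w(y) > 0, u(y) > 0, and existence of a constant m > 0 such that w(y) ≥ m·u(y) and w(y) ≤ u(y) for all y ∈ Y. Define π(y) = w(y)/Σ_{z∈Y} w(z) and u* = max_{y∈Y} u(y). Then for any ε ∈ (0,1], the set Z = {y ∈ Y : log u(y) ≥ (1 - ε/2)·log u*} satisfies Σ_{y ∈ Y\Z} π(y) ≤ (|Y|/m)·u*^{-ε/2}. -/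
open Finset

/-- Schedules of near-maximal weight are selected with high probability:
the probability (under `π ∝ w`) of the set of schedules `y` with
`log u(y) < (1 - ε/2) log u*` is at most `(|Y|/m) · u*^{-ε/2}`. -/
theorem near_max_weight_prob_bound {Y : Type*} [Fintype Y] [Nonempty Y] [DecidableEq Y]
    (w u : Y → ℝ) (m : ℝ) (hm : 0 < m)
    (hw_pos : ∀ y, 0 < w y) (hu_one : ∀ y, 1 ≤ u y)
    (h_low : ∀ y, m * u y ≤ w y) (h_up : ∀ y, w y ≤ u y)
    (ε : ℝ) (hε : ε ∈ Set.Ioc (0 : ℝ) 1) :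
    let π : Y → ℝ := fun y => w y / ∑ z, w z
    let ustar : ℝ := univ.sup' univ_nonempty u
    let Z : Finset Y := univ.filter fun y => (1 - ε / 2) * Real.log ustar ≤ Real.log (u y)
    ∑ y ∈ univ \ Z, π y ≤ ((Fintype.card Y : ℝ) / m) * ustar ^ (-(ε / 2)) := by
  intro π ustar Z
  obtain ⟨y0, _, hy0'⟩ := Finset.exists_mem_eq_sup' univ_nonempty u
  have hy0 : ustar = u y0 := hy0'
  have hustar1 : 1 ≤ ustar := le_trans (hu_one y0) (by rw [hy0])
  have hustar0 : 0 < ustar := lt_of_lt_of_le one_pos hustar1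
  have hsum_ge : m * ustar ≤ ∑ z, w z := by
    calc m * ustar = m * u y0 := by rw [hy0]
    _ ≤ w y0 := h_low y0
    _ ≤ ∑ z, w z := Finset.single_le_sum (fun z _ => (hw_pos z).le) (mem_univ y0)
  have hsum_pos : 0 < ∑ z, w z := lt_of_lt_of_le (mul_pos hm hustar0) hsum_ge
  have key : ∀ y ∈ univ \ Z, π y ≤ (1 / m) * ustar ^ (-(ε / 2)) := by
    intro y hy
    simp only [Finset.mem_sdiff, Z, Finset.mem_filter, mem_univ, true_and, not_le] at hy
    have hulog : u y < ustar ^ ((1 : ℝ) - ε / 2) := by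
      have h1 := Real.exp_lt_exp.mpr hy
      rw [Real.exp_log (lt_of_lt_of_le one_pos (hu_one y))] at h1
      rwa [Real.rpow_def_of_pos hustar0, mul_comm]
    have hπ : π y ≤ ustar ^ ((1 : ℝ) - ε / 2) / (m * ustar) := by
      apply div_le_div₀ (Real.rpow_nonneg hustar0.le _) _ (mul_pos hm hustar0) hsum_ge
      exact le_trans (h_up y) hulog.le
    refine le_trans hπ (le_of_eq ?_)
    rw [show (1 : ℝ) - ε / 2 = -(ε / 2) + 1 by ring, Real.rpow_add hustar0,
      Real.rpow_one]
    field_simp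
  calc ∑ y ∈ univ \ Z, π y ≤ ∑ y ∈ univ \ Z, (1 / m) * ustar ^ (-(ε / 2)) :=
        Finset.sum_le_sum key
    _ = (univ \ Z).card * ((1 / m) * ustar ^ (-(ε / 2))) := by
        rw [Finset.sum_const, nsmul_eq_mul]
    _ ≤ (Fintype.card Y : ℝ) * ((1 / m) * ustar ^ (-(ε / 2))) := by
        apply mul_le_mul_of_nonneg_right
        · exact_mod_cast Finset.card_le_card (Finset.sdiff_subset)
        · positivity
    _ = ((Fintype.card Y : ℝ) / m) * ustar ^ (-(ε / 2)) := by ring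
end

section
/- For a continuous-time Markov chain on the set of feasible schedules Y(x) ⊆ {0,1}^{K×J}, with transitions y → y + e_{kj} at rate (x_k - y_k)·ν_k·β_{kj} and y + e_{kj} → y at rate φ_k (whenever y + e_{kj} ∈ Y(x)), the measure w(x,y) = Π_{k : x_k > 0} [x_k!/(x_k - y_k)!]·α_k^{y_k}·Π_j β_{kj}^{y_{kj}}, with α_k = ν_k/φ_k, satisfies the detailed balance equations: w(x,y)·(x_k - y_k)·ν_k·β_{kj} = w(x, y + e_{kj})·φ_k for every y with y + e_{kj} ∈ Y(x). -/
open Finset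

set_option maxHeartbeats 1000000 in
/-- Detailed balance for the multi-channel CSMA schedule process: the measure
`w(x,y) = ∏_{k: x_k>0} (x_k!/(x_k-y_k)!) α_k^{y_k} ∏_j β_{kj}^{y_{kj}}` satisfies
`w(x,y)·(x_k - y_k)·ν_k·β_{kj} = w(x, y+e_{kj})·φ_k`. -/
theorem csma_detailed_balance (K J : ℕ) (hK : 0 < K) (hJ : 0 < J)
    (ν φ α : Fin K → ℝ) (hν : ∀ k, 0 < ν k) (hφ : ∀ k, 0 < φ k)
    (hα : ∀ k, α k = ν k / φ k)
    (β : Fin K → Fin J → ℝ) (hβ : ∀ k j, 0 ≤ β k j) (hβsum : ∀ k, ∑ j, β k j = 1)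
    (w : (Fin K → ℕ) → (Fin K → Fin J → ℕ) → ℝ)
    (hw : ∀ x y, w x y = ∏ k, if 0 < x k then
      ((x k).descFactorial (∑ j, y k j) : ℝ) * α k ^ (∑ j, y k j) *
        ∏ j, β k j ^ y k j else 1)
    (x : Fin K → ℕ) (y : Fin K → Fin J → ℕ) (hy01 : ∀ k j, y k j ≤ 1)
    (k : Fin K) (j : Fin J)
    (hkj : y k j = 0) (hfeas : ∑ j', y k j' < x k) :
    w x y * ((x k : ℝ) - (∑ j', y k j' : ℕ)) * ν k * β k j =
      w x (Function.update y k (Function.update (y k) j 1)) * φ k := by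
  set y' := Function.update y k (Function.update (y k) j 1) with hy'
  have hxk : 0 < x k := lt_of_le_of_lt (Nat.zero_le _) hfeas
  have hyk : y' k = Function.update (y k) j 1 := Function.update_self _ _ _
  -- sum for updated row
  have hsum : ∑ j', y' k j' = (∑ j', y k j') + 1 := by
    rw [hyk]
    rw [← Finset.sum_erase_add _ _ (mem_univ j), ← Finset.sum_erase_add _ _ (mem_univ j)]
    have h1 : ∑ j' ∈ univ.erase j, Function.update (y k) j 1 j' = ∑ j' ∈ univ.erase j, y k j' :=
      Finset.sum_congr rfl (fun i hi => Function.update_of_ne (Finset.ne_of_mem_erase hi) _ _)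
    rw [h1, Function.update_self, hkj]
  -- product of β for updated row
  have hprod : ∏ j', β k j' ^ y' k j' = β k j * ∏ j', β k j' ^ y k j' := by
    rw [hyk]
    rw [← Finset.prod_erase_mul _ _ (mem_univ j), ← Finset.prod_erase_mul _ _ (mem_univ j)]
    have h1 : ∏ j' ∈ univ.erase j, β k j' ^ Function.update (y k) j 1 j' =
        ∏ j' ∈ univ.erase j, β k j' ^ y k j' :=
      Finset.prod_congr rfl (fun i hi => by rw [Function.update_of_ne (Finset.ne_of_mem_erase hi)])
    rw [h1, Function.update_self, hkj, pow_one, pow_zero, mul_one]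
    ring
  rw [hw, hw]
  rw [← Finset.prod_erase_mul _ _ (mem_univ k), ← Finset.prod_erase_mul _ _ (mem_univ k)]
  have hrest : ∏ k' ∈ univ.erase k, (if 0 < x k' then
      ((x k').descFactorial (∑ j', y' k' j') : ℝ) * α k' ^ (∑ j', y' k' j') *
        ∏ j', β k' j' ^ y' k' j' else 1) =
      ∏ k' ∈ univ.erase k, (if 0 < x k' then
      ((x k').descFactorial (∑ j', y k' j') : ℝ) * α k' ^ (∑ j', y k' j') *
        ∏ j', β k' j' ^ y k' j' else 1) := by
    refine Finset.prod_congr rfl (fun i hi => ?_)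
    have : y' i = y i := Function.update_of_ne (Finset.ne_of_mem_erase hi) _ _
    rw [this]
  rw [hrest, if_pos hxk, if_pos hxk, hsum, hprod]
  have hdesc : ((x k).descFactorial ((∑ j', y k j') + 1) : ℝ) =
      ((x k : ℝ) - (∑ j', y k j' : ℕ)) * ((x k).descFactorial (∑ j', y k j') : ℝ) := by
    rw [Nat.descFactorial_succ]
    push_cast [Nat.cast_sub hfeas.le]
    ring
  rw [hdesc, hα, pow_succ]
  have hφne : φ k ≠ 0 := (hφ k).ne'
  field_simp
end

section
/- Define F(x) = Σ_{k : x_k > 0} (x_k σ_k / φ_k) log(x_k α_k) on ℕ^K with σ_k, φ_k, α_k > 0. For the Markov chain with transition rates λ_k from x to x+e_k and φ_k(x)/σ_k from x to x−e_k (when x_k > 0), where 0 ≤ φ_k(x) ≤ J·φ_k, the drift Δ F(x) = Σ_k λ_k (F(x+e_k) − F(x)) + Σ_{k : x_k>0} (φ_k(x)/σ_k)(F(x−e_k) − F(x)) decomposes as Δ F(x) = G(x) + H(x), where G(x) = Σ_{k:x_k>0} ((ρ_k − φ_k(x))/φ_k) log(x_k α_k) with ρ_k = λ_k σ_k, and H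 is bounded uniformly over x ∈ ℕ^K. -/
open Finset Real

private lemma aux_sum_update {K : ℕ} (g : Fin K → ℕ → ℝ) (x : Fin K → ℕ) (k : Fin K) (m : ℕ) :
    (∑ j, g j (Function.update x k m j)) - ∑ j, g j (x j) = g k m - g k (x k) := by
  have h1 : (∑ j, g j (Function.update x k m j))
      = g k m + ∑ j ∈ univ.erase k, g j (x j) := by
    rw [← Finset.add_sum_erase _ _ (mem_univ k), Function.update_self]
    congr 1
    exact Finset.sum_congr rfl fun j hj => by
      rw [Function.update_of_ne (Finset.ne_of_mem_erase hj)]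
  have h2 : (∑ j, g j (x j)) = g k (x k) + ∑ j ∈ univ.erase k, g j (x j) :=
    (Finset.add_sum_erase _ _ (mem_univ k)).symm
  rw [h1, h2]; ring

private lemma aux_up_log (n : ℕ) (hn : 1 ≤ n) {a : ℝ} (ha : 0 < a) :
    Real.log (((n:ℝ)+1)*a) = Real.log (1 + 1/(n:ℝ)) + Real.log ((n:ℝ)*a) := by
  have hn' : (0:ℝ) < n := by exact_mod_cast hn
  have h1 : ((n:ℝ)+1)*a = (1 + 1/n) * ((n:ℝ)*a) := by field_simp
  rw [h1, Real.log_mul (by positivity) (by positivity)]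

private lemma aux_down_log (n : ℕ) (hn : 2 ≤ n) {a : ℝ} (ha : 0 < a) :
    Real.log (((n:ℝ)-1)*a) = Real.log (1 - 1/(n:ℝ)) + Real.log ((n:ℝ)*a) := by
  have hn' : (2:ℝ) ≤ n := by exact_mod_cast hn
  have hn0 : (0:ℝ) < n := by linarith
  have h2 : (0:ℝ) < 1 - 1/(n:ℝ) := by
    have : 1/(n:ℝ) < 1 := by rw [div_lt_one hn0]; linarith
    linarith
  have h1 : ((n:ℝ)-1)*a = (1 - 1/n) * ((n:ℝ)*a) := by field_simp
  rw [h1, Real.log_mul (ne_of_gt h2) (by positivity)]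

private lemma aux_up_bound (n : ℕ) (hn : 1 ≤ n) :
    |((n:ℝ)+1) * Real.log (1 + 1/(n:ℝ))| ≤ 2 := by
  have hn' : (1:ℝ) ≤ n := by exact_mod_cast hn
  have hn0 : (0:ℝ) < n := by linarith
  have hlog0 : 0 ≤ Real.log (1 + 1/(n:ℝ)) := Real.log_nonneg (by nlinarith [one_div_pos.mpr hn0])
  have hlog : Real.log (1 + 1/(n:ℝ)) ≤ 1/(n:ℝ) := by
    have := Real.log_le_sub_one_of_pos (x := 1 + 1/(n:ℝ)) (by positivity)
    linarith
  rw [abs_of_nonneg (mul_nonneg (by linarith) hlog0)]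
  have h1 : ((n:ℝ)+1) * Real.log (1+1/(n:ℝ)) ≤ ((n:ℝ)+1) * (1/n) :=
    mul_le_mul_of_nonneg_left hlog (by linarith)
  have h2 : ((n:ℝ)+1)*(1/n) ≤ 2 := by
    rw [mul_one_div, div_le_iff₀ hn0]; linarith
  linarith

private lemma aux_down_bound (n : ℕ) :
    |((n:ℝ)-1) * Real.log (1 - 1/(n:ℝ))| ≤ 2 := by
  rcases le_or_gt n 1 with h | h
  · interval_cases n <;> norm_num
  · have hn' : (2:ℝ) ≤ n := by exact_mod_cast h
    have hn0 : (0:ℝ) < n := by linarith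
    have hn1 : (0:ℝ) < (n:ℝ)-1 := by linarith
    have h1 : 0 < 1 - 1/(n:ℝ) := by
      have : 1/(n:ℝ) < 1 := by rw [div_lt_one hn0]; linarith
      linarith
    have hlogneg : Real.log (1 - 1/(n:ℝ)) ≤ 0 :=
      Real.log_nonpos (by linarith) (by
        have : 0 < 1/(n:ℝ) := by positivity
        linarith)
    have key : -Real.log (1 - 1/(n:ℝ)) ≤ 1/((n:ℝ)-1) := by
      rw [← Real.log_inv]
      have hinv : (1 - 1/(n:ℝ))⁻¹ = 1 + 1/((n:ℝ)-1) := by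
        field_simp
        ring
      rw [hinv]
      have := Real.log_le_sub_one_of_pos (x := 1 + 1/((n:ℝ)-1)) (by positivity)
      linarith
    rw [abs_of_nonpos (mul_nonpos_of_nonneg_of_nonpos (by linarith) hlogneg)]
    have e : -(((n:ℝ)-1) * Real.log (1-1/(n:ℝ))) = ((n:ℝ)-1) * (-Real.log (1-1/(n:ℝ))) := by ring
    rw [e]
    calc ((n:ℝ)-1) * (-Real.log (1-1/(n:ℝ))) ≤ ((n:ℝ)-1) * (1/((n:ℝ)-1)) :=
          mul_le_mul_of_nonneg_left key (le_of_lt hn1)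
      _ = 1 := by field_simp
      _ ≤ 2 := by norm_num


/-- Drift decomposition for the Lyapunov function
`F(x) = Σ_{k:x_k>0} (x_k σ_k/φ_k) log(x_k α_k)`: the drift `ΔF` decomposes as
`ΔF = G + H`, where `G(x) = Σ_{k:x_k>0} ((ρ_k - φ_k(x))/φ_k) log(x_k α_k)` and
`H` is bounded uniformly over all states. -/
theorem lyapunov_drift_decomposition (K J : ℕ) (hK : 0 < K) (hJ : 0 < J)
    (σ φ α lam : Fin K → ℝ)
    (hσ : ∀ k, 0 < σ k) (hφ : ∀ k, 0 < φ k) (hα : ∀ k, 0 < α k)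
    (hlam : ∀ k, 0 < lam k)
    (ρ : Fin K → ℝ) (hρ : ∀ k, ρ k = lam k * σ k)
    (φx : Fin K → (Fin K → ℕ) → ℝ)
    (hφx : ∀ k x, 0 ≤ φx k x ∧ φx k x ≤ J * φ k)
    (F ΔF G H : (Fin K → ℕ) → ℝ)
    (hF : ∀ x, F x = ∑ k ∈ univ.filter (fun k => 0 < x k),
      (x k : ℝ) * σ k / φ k * log ((x k : ℝ) * α k))
    (hΔF : ∀ x, ΔF x =
      (∑ k, lam k * (F (Function.update x k (x k + 1)) - F x)) +
      ∑ k ∈ univ.filter (fun k => 0 < x k),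
        φx k x / σ k * (F (Function.update x k (x k - 1)) - F x))
    (hG : ∀ x, G x = ∑ k ∈ univ.filter (fun k => 0 < x k),
      (ρ k - φx k x) / φ k * log ((x k : ℝ) * α k))
    (hH : ∀ x, H x =
      (∑ k ∈ univ.filter (fun k => 0 < x k),
        ρ k / φ k * ((x k : ℝ) + 1) * log (1 + 1 / (x k : ℝ))) +
      (∑ k ∈ univ.filter (fun k => 0 < x k),
        φx k x / φ k * ((x k : ℝ) - 1) * log (1 - 1 / (x k : ℝ))) +
      ∑ k ∈ univ.filter (fun k => x k = 0), ρ k / φ k * log (α k)) :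
    (∀ x, ΔF x = G x + H x) ∧ ∃ B : ℝ, ∀ x, |H x| ≤ B := by
  classical
  set g : Fin K → ℕ → ℝ :=
    fun k n => if 0 < n then (n:ℝ) * σ k / φ k * Real.log ((n:ℝ) * α k) else 0 with hgdef
  have hFg : ∀ x, F x = ∑ k, g k (x k) := by
    intro x
    rw [hF, Finset.sum_filter]
  have hdiff : ∀ (x : Fin K → ℕ) k m, F (Function.update x k m) - F x = g k m - g k (x k) := by
    intro x k m
    rw [hFg, hFg]
    exact aux_sum_update g x k m
  constructor
  · intro x
    rw [hΔF, hG, hH]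
    simp only [hdiff]
    rw [Finset.sum_filter, Finset.sum_filter, Finset.sum_filter, Finset.sum_filter,
      Finset.sum_filter, ← Finset.sum_add_distrib, ← Finset.sum_add_distrib,
      ← Finset.sum_add_distrib, ← Finset.sum_add_distrib]
    refine Finset.sum_congr rfl fun k _ => ?_
    by_cases hk : 0 < x k
    · have hkne : ¬ x k = 0 := hk.ne'
      rw [if_pos hk, if_pos hk, if_pos hk, if_pos hk, if_neg hkne]
      set n := x k with hn
      have hn1 : 1 ≤ n := hk
      have hup : g k (n + 1) = ((n:ℝ)+1) * σ k / φ k *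
          (Real.log (1 + 1/(n:ℝ)) + Real.log ((n:ℝ) * α k)) := by
        have h0 : 0 < n + 1 := Nat.succ_pos n
        simp only [hgdef, if_pos h0]
        push_cast
        rw [aux_up_log n hn1 (hα k)]
      have hmid : g k n = (n:ℝ) * σ k / φ k * Real.log ((n:ℝ) * α k) := by
        simp only [hgdef, if_pos hk]
      have hdown : g k (n - 1) = σ k / φ k *
          (((n:ℝ)-1) * Real.log (1 - 1/(n:ℝ)) + ((n:ℝ)-1) * Real.log ((n:ℝ) * α k)) := by
        rcases eq_or_lt_of_le hn1 with h1 | h2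
        · simp only [hgdef, ← h1]
          norm_num
        · have h2' : 2 ≤ n := h2
          have hpos : 0 < n - 1 := by omega
          have hcast : ((n - 1 : ℕ) : ℝ) = (n:ℝ) - 1 := by
            push_cast [Nat.cast_sub hn1]
            ring
          simp only [hgdef, if_pos hpos, hcast]
          rw [aux_down_log n h2' (hα k)]
          ring
      rw [hup, hmid, hdown, hρ k]
      have hσ0 := (hσ k).ne'
      have hφ0 := (hφ k).ne'
      field_simp
      ring
    · have hk0 : x k = 0 := Nat.eq_zero_of_not_pos hk
      rw [if_neg hk, if_neg hk, if_neg hk, if_neg hk, if_pos hk0]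
      have h1 : g k (x k + 1) = σ k / φ k * Real.log (α k) := by
        simp only [hgdef, hk0]
        norm_num
      have h0 : g k (x k) = 0 := by simp [hgdef, hk0]
      rw [h1, h0, hρ k]
      ring
  · refine ⟨(∑ k, 2 * (ρ k / φ k)) + (∑ _ : Fin K, 2 * (J:ℝ)) +
      ∑ k, |ρ k / φ k * Real.log (α k)|, fun x => ?_⟩
    rw [hH]
    have hρφ : ∀ k, 0 ≤ ρ k / φ k := fun k => by
      rw [hρ k]
      exact div_nonneg (mul_nonneg (hlam k).le (hσ k).le) (hφ k).le
    have b1 : |∑ k ∈ univ.filter (fun k => 0 < x k),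
        ρ k / φ k * ((x k : ℝ) + 1) * Real.log (1 + 1 / (x k : ℝ))| ≤
        ∑ k, 2 * (ρ k / φ k) := by
      calc _ ≤ ∑ k ∈ univ.filter (fun k => 0 < x k),
              |ρ k / φ k * ((x k : ℝ) + 1) * Real.log (1 + 1 / (x k : ℝ))| :=
            Finset.abs_sum_le_sum_abs _ _
        _ ≤ ∑ k ∈ univ.filter (fun k => 0 < x k), 2 * (ρ k / φ k) := by
            refine Finset.sum_le_sum fun k hk => ?_
            have hxk : 0 < x k := (Finset.mem_filter.mp hk).2
            have e : ρ k / φ k * ((x k : ℝ) + 1) * Real.log (1 + 1 / (x k : ℝ)) =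
                ρ k / φ k * (((x k : ℝ) + 1) * Real.log (1 + 1 / (x k : ℝ))) := by ring
            rw [e, abs_mul, abs_of_nonneg (hρφ k)]
            calc ρ k / φ k * |((x k : ℝ) + 1) * Real.log (1 + 1 / (x k : ℝ))| ≤
                  ρ k / φ k * 2 :=
                mul_le_mul_of_nonneg_left (aux_up_bound (x k) hxk) (hρφ k)
              _ = 2 * (ρ k / φ k) := by ring
        _ ≤ ∑ k, 2 * (ρ k / φ k) :=
            Finset.sum_le_sum_of_subset_of_nonneg (Finset.filter_subset _ _)
              (fun k _ _ => by have := hρφ k; linarith)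
    have b2 : |∑ k ∈ univ.filter (fun k => 0 < x k),
        φx k x / φ k * ((x k : ℝ) - 1) * Real.log (1 - 1 / (x k : ℝ))| ≤
        ∑ _ : Fin K, 2 * (J:ℝ) := by
      calc _ ≤ ∑ k ∈ univ.filter (fun k => 0 < x k),
              |φx k x / φ k * ((x k : ℝ) - 1) * Real.log (1 - 1 / (x k : ℝ))| :=
            Finset.abs_sum_le_sum_abs _ _
        _ ≤ ∑ k ∈ univ.filter (fun k => 0 < x k), 2 * (J:ℝ) := by
            refine Finset.sum_le_sum fun k _ => ?_
            have hnn : 0 ≤ φx k x / φ k := div_nonneg (hφx k x).1 (hφ k).le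
            have hle : φx k x / φ k ≤ (J:ℝ) := by
              rw [div_le_iff₀ (hφ k)]
              exact (hφx k x).2
            have e : φx k x / φ k * ((x k : ℝ) - 1) * Real.log (1 - 1 / (x k : ℝ)) =
                φx k x / φ k * (((x k : ℝ) - 1) * Real.log (1 - 1 / (x k : ℝ))) := by ring
            rw [e, abs_mul, abs_of_nonneg hnn]
            calc φx k x / φ k * |((x k : ℝ) - 1) * Real.log (1 - 1 / (x k : ℝ))| ≤
                  (J:ℝ) * 2 :=
                mul_le_mul hle (aux_down_bound (x k)) (abs_nonneg _) (Nat.cast_nonneg J)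
              _ = 2 * (J:ℝ) := by ring
        _ ≤ ∑ _ : Fin K, 2 * (J:ℝ) :=
            Finset.sum_le_sum_of_subset_of_nonneg (Finset.filter_subset _ _)
              (fun k _ _ => by positivity)
    have b3 : |∑ k ∈ univ.filter (fun k => x k = 0), ρ k / φ k * Real.log (α k)| ≤
        ∑ k, |ρ k / φ k * Real.log (α k)| := by
      calc _ ≤ ∑ k ∈ univ.filter (fun k => x k = 0), |ρ k / φ k * Real.log (α k)| :=
            Finset.abs_sum_le_sum_abs _ _
        _ ≤ ∑ k, |ρ k / φ k * Real.log (α k)| :=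
            Finset.sum_le_sum_of_subset_of_nonneg (Finset.filter_subset _ _)
              (fun k _ _ => abs_nonneg _)
    refine le_trans (abs_add_le _ _) ?_
    refine le_trans (add_le_add_left (abs_add_le _ _) _) ?_
    exact add_le_add (add_le_add b1 b2) b3
end

section
/- For ρ_1 ∈ (0,1), define f(ρ_1) = (1/3)ρ_1^4 − (2/3)ρ_1^3 − (2/3)ρ_1^2 + 1. Then f(ρ_1) < 1 for all ρ_1 ∈ (0,1), and in the homogeneous case the equation ρ = f(ρ) has a unique solution ρ* ∈ (0,1) with ρ* < 2/3; moreover f(0.63) < 0.63, so any ρ_1 = ρ_3 > 0.63 satisfies ρ_3 > f(ρ_1). -/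
private lemma bt_anti : ∀ a b : ℝ, 0 ≤ a → a < b → b ≤ 1 →
    (1/3)*b^4 - (2/3)*b^3 - (2/3)*b^2 + 1 - b < (1/3)*a^4 - (2/3)*a^3 - (2/3)*a^2 + 1 - a := by
  intro a b ha hab hb
  have hd : 0 < b - a := sub_pos.2 hab
  have hb0 : 0 ≤ b := ha.trans hab.le
  have h1b : 0 ≤ 1 - b := sub_nonneg.2 hb
  have h1a : 0 ≤ 1 - a := by linarith
  nlinarith [mul_nonneg hd.le (mul_nonneg h1b (sq_nonneg b)),
    mul_nonneg hd.le (mul_nonneg (mul_nonneg ha h1b) hb0),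
    mul_nonneg hd.le (mul_nonneg (mul_nonneg ha ha) h1b),
    mul_nonneg hd.le (mul_nonneg (mul_nonneg ha ha) h1a),
    mul_nonneg hd.le (sq_nonneg a), mul_nonneg hd.le (sq_nonneg b),
    mul_nonneg hd.le (mul_nonneg ha hb0), mul_nonneg hd.le ha, mul_nonneg hd.le hb0]

/-- Properties of the bow-tie saturated throughput polynomial
`f(ρ) = (1/3)ρ⁴ − (2/3)ρ³ − (2/3)ρ² + 1`: it is below 1 on (0,1), the equation
`ρ = f(ρ)` has a unique solution in (0,1), which is below 2/3; moreover
`f(0.63) < 0.63`, so every `ρ ∈ (0.63, 1]` satisfies `ρ > f(ρ)`. -/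
theorem bow_tie_polynomial_properties
    (f : ℝ → ℝ)
    (hf : ∀ x, f x = (1 / 3) * x ^ 4 - (2 / 3) * x ^ 3 - (2 / 3) * x ^ 2 + 1) :
    (∀ ρ ∈ Set.Ioo (0 : ℝ) 1, f ρ < 1) ∧
    (∃! ρstar : ℝ, ρstar ∈ Set.Ioo (0 : ℝ) 1 ∧ f ρstar = ρstar) ∧
    (∀ ρstar ∈ Set.Ioo (0 : ℝ) 1, f ρstar = ρstar → ρstar < 2 / 3) ∧
    f 0.63 < 0.63 ∧
    (∀ ρ : ℝ, 0.63 < ρ → ρ ≤ 1 → f ρ < ρ) := by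
  have hanti : ∀ a b : ℝ, 0 ≤ a → a < b → b ≤ 1 → f b - b < f a - a := by
    intro a b ha hab hb
    rw [hf, hf]
    have := bt_anti a b ha hab hb
    linarith
  have hcont : Continuous fun x : ℝ => f x - x := by
    have : (fun x : ℝ => f x - x) =
        fun x => (1/3)*x^4 - (2/3)*x^3 - (2/3)*x^2 + 1 - x := by
      funext x; rw [hf]
    rw [this]; continuity
  have h0 : f 0 - 0 = 1 := by rw [hf]; norm_num
  have h1 : f 1 - 1 = -1 := by rw [hf]; norm_num
  -- existence of fixed point
  have hex : ∃ ρ ∈ Set.Ioo (0:ℝ) 1, f ρ - ρ = 0 := by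
    have := intermediate_value_Ioo' (a := (0:ℝ)) (b := 1) zero_le_one
      (hcont.continuousOn (s := Set.Icc 0 1))
    have hmem : (0:ℝ) ∈ Set.Ioo (f 1 - 1) (f 0 - 0) := by
      rw [h0, h1]; norm_num
    obtain ⟨ρ, hρ, hval⟩ := this hmem
    exact ⟨ρ, hρ, hval⟩
  refine ⟨?_, ?_, ?_, ?_, ?_⟩
  · intro ρ ⟨h1', h2'⟩
    rw [hf]; nlinarith [mul_pos h1' h1', mul_pos (mul_pos h1' h1') h1', sq_nonneg ρ, sq_nonneg (ρ-1)]
  · obtain ⟨ρ, hρ, hval⟩ := hex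
    refine ⟨ρ, ⟨hρ, by linarith⟩, ?_⟩
    rintro y ⟨⟨hy0, hy1⟩, hyfix⟩
    by_contra hne
    rcases lt_or_gt_of_ne hne with h | h
    · have := hanti y ρ hy0.le h hρ.2.le
      rw [hyfix] at this; linarith
    · have := hanti ρ y hρ.1.le h hy1.le
      rw [hyfix] at this; linarith
  · intro ρ ⟨h1', h2'⟩ hfix
    by_contra hge
    push_neg at hge
    rcases eq_or_lt_of_le hge with h | h
    · rw [← h] at hfix; rw [hf] at hfix; norm_num at hfix
    · have := hanti (2/3) ρ (by norm_num) h h2'.le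
      rw [hfix] at this
      rw [hf] at this
      nlinarith
  · rw [hf]; norm_num
  · intro ρ hρ hρ1
    rcases eq_or_lt_of_le hρ1 with h | h
    · rw [h, hf]; norm_num
    · have := hanti ρ 1 (by linarith) h le_rfl
      rw [hf 1] at this
      have hlt : f 0.63 - 0.63 < f ρ - ρ → False := by
        intro hh
        have := hanti 0.63 ρ (by norm_num) hρ hρ1
        linarith
      by_contra hge
      push_neg at hge
      have h63 : f 0.63 - 0.63 < 0 := by rw [hf]; norm_num
      have := hanti 0.63 ρ (by norm_num) hρ hρ1
      linarith
end

section
/- For the L-partite network, the capacity region equals {φ ∈ ℝ_{≥0}^K : Σ_{l=1}^L max_{k ∈ C_l} (φ_k/φ̄_k) ≤ J}. -/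
open MeasureTheory

lemma ceil_antitone (c : ℝ) : Antitone (fun u : ℝ => ((⌈c - u⌉ : ℤ) : ℝ)) := by
  intro u v huv
  simp only
  exact_mod_cast Int.ceil_le_ceil (by linarith)

lemma ceil_intervalIntegrable (c a b : ℝ) :
    IntervalIntegrable (fun u : ℝ => ((⌈c - u⌉ : ℤ) : ℝ)) volume a b :=
  ((ceil_antitone c).antitoneOn _).intervalIntegrable

lemma ae_ne_real (t : ℝ) : ∀ᵐ x : ℝ, x ≠ t := by
  have h : ({t} : Set ℝ) = {x | ¬ x ≠ t} := by ext x; simp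
  rw [ae_iff, ← h]; exact measure_singleton t

lemma ceil_integral (c : ℝ) : ∫ u in (0:ℝ)..1, ((⌈c - u⌉ : ℤ) : ℝ) = c := by
  set t : ℝ := Int.fract c with ht
  have ht0 : 0 ≤ t := Int.fract_nonneg c
  have ht1 : t < 1 := Int.fract_lt_one c
  have hfl : c = (⌊c⌋ : ℝ) + t := by rw [ht, Int.fract]; ring
  have hsplit : ∫ u in (0:ℝ)..1, ((⌈c - u⌉ : ℤ) : ℝ) =
      (∫ u in (0:ℝ)..t, ((⌈c - u⌉ : ℤ) : ℝ)) + ∫ u in t..1, ((⌈c - u⌉ : ℤ) : ℝ) :=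
    (intervalIntegral.integral_add_adjacent_intervals (ceil_intervalIntegrable c 0 t)
      (ceil_intervalIntegrable c t 1)).symm
  have h1 : ∫ u in (0:ℝ)..t, ((⌈c - u⌉ : ℤ) : ℝ) = t * ((⌊c⌋ : ℝ) + 1) := by
    have he : ∫ u in (0:ℝ)..t, ((⌈c - u⌉ : ℤ) : ℝ) = ∫ u in (0:ℝ)..t, (((⌊c⌋ + 1 : ℤ)) : ℝ) := by
      apply intervalIntegral.integral_congr_ae
      filter_upwards [ae_ne_real t] with u hu hmem
      rw [Set.uIoc_of_le ht0] at hmem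
      have h1 : ⌈c - u⌉ = ⌊c⌋ + 1 := by
        rw [Int.ceil_eq_iff]
        have hlt : u < t := lt_of_le_of_ne hmem.2 hu
        constructor
        · push_cast; linarith
        · push_cast; linarith [hmem.1]
      rw [h1]
    rw [he, intervalIntegral.integral_const]
    push_cast [smul_eq_mul]
    ring
  have h2 : ∫ u in t..1, ((⌈c - u⌉ : ℤ) : ℝ) = (1 - t) * (⌊c⌋ : ℝ) := by
    have he : ∫ u in t..1, ((⌈c - u⌉ : ℤ) : ℝ) = ∫ u in t..1, ((⌊c⌋ : ℤ) : ℝ) := by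
      apply intervalIntegral.integral_congr_ae
      filter_upwards [ae_ne_real 1] with u hu hmem
      rw [Set.uIoc_of_le ht1.le] at hmem
      have h1 : ⌈c - u⌉ = ⌊c⌋ := by
        rw [Int.ceil_eq_iff]
        have hlt : u < 1 := lt_of_le_of_ne hmem.2 hu
        constructor
        · push_cast; linarith
        · push_cast; linarith [hmem.1]
      rw [h1]
    rw [he, intervalIntegral.integral_const]
    simp [smul_eq_mul, mul_comm]
  rw [hsplit, h1, h2]
  linarith

open Finset

/-- Capacity region of an `L`-partite network with `J` channels: the set of
throughput vectors achievable by randomizing over feasible schedules is exactly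
`{φ ≥ 0 : Σ_l max_{k ∈ C_l} φ_k/φ̄_k ≤ J}`. -/
theorem Lpartite_capacity_region (K L J : ℕ) (hK : 0 < K) (hL : 0 < L) (hJ : 0 < J)
    (parts : Fin K → Fin L) (hsurj : Function.Surjective parts)
    (φbar : Fin K → ℝ) (hφbar : ∀ k, 0 < φbar k)
    -- the finite set of feasible schedules
    (Y : Finset (Fin K → ℕ))
    (hY : ∀ y : Fin K → ℕ, y ∈ Y ↔ ∃ n : Fin L → ℕ,
      (∑ l, n l ≤ J) ∧ ∀ k, y k ≤ n (parts k)) :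
    {φ : Fin K → ℝ | ∃ π : (Fin K → ℕ) → ℝ, (∀ y ∈ Y, 0 ≤ π y) ∧
        (∑ y ∈ Y, π y = 1) ∧ ∀ k, φ k = φbar k * ∑ y ∈ Y, π y * (y k : ℝ)} =
    {φ : Fin K → ℝ | (∀ k, 0 ≤ φ k) ∧
      ∑ l : Fin L, (univ.filter (fun k => parts k = l)).sup'
        (by
          obtain ⟨k, hk⟩ := hsurj l
          exact ⟨k, by simp [hk]⟩)
        (fun k => φ k / φbar k) ≤ J} := by
  ext φ
  simp only [Set.mem_setOf_eq]
  constructor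
  · rintro ⟨π, hπ0, hπ1, hφ⟩
    have hx : ∀ k, φ k / φbar k = ∑ y ∈ Y, π y * (y k : ℝ) := by
      intro k; rw [hφ k, mul_div_cancel_left₀ _ (hφbar k).ne']
    constructor
    · intro k
      rw [hφ k]
      exact mul_nonneg (hφbar k).le (Finset.sum_nonneg fun y hy =>
        mul_nonneg (hπ0 y hy) (by positivity))
    · classical
      set N : (Fin K → ℕ) → Fin L → ℕ :=
        fun y => if hy : y ∈ Y then Classical.choose ((hY y).1 hy) else 0 with hNdef
      have hN : ∀ y ∈ Y, (∑ l, N y l ≤ J) ∧ ∀ k, y k ≤ N y (parts k) := by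
        intro y hy
        simp only [hNdef, dif_pos hy]
        exact Classical.choose_spec ((hY y).1 hy)
      calc ∑ l : Fin L, (univ.filter (fun k => parts k = l)).sup' (by
              obtain ⟨k, hk⟩ := hsurj l
              exact ⟨k, by simp [hk]⟩) (fun k => φ k / φbar k)
          ≤ ∑ l : Fin L, ∑ y ∈ Y, π y * (N y l : ℝ) := by
            apply Finset.sum_le_sum
            intro l _
            apply Finset.sup'_le
            intro k hk
            have hkl : parts k = l := by simpa using hk
            rw [hx k]
            apply Finset.sum_le_sum
            intro y hy
            have := (hN y hy).2 k
            rw [hkl] at this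
            exact mul_le_mul_of_nonneg_left (by exact_mod_cast this) (hπ0 y hy)
        _ = ∑ y ∈ Y, π y * ((∑ l : Fin L, N y l : ℕ) : ℝ) := by
            rw [Finset.sum_comm]
            apply Finset.sum_congr rfl
            intro y _
            push_cast
            rw [Finset.mul_sum]
        _ ≤ ∑ y ∈ Y, π y * (J : ℝ) := by
            apply Finset.sum_le_sum
            intro y hy
            exact mul_le_mul_of_nonneg_left (by exact_mod_cast (hN y hy).1) (hπ0 y hy)
        _ = J := by rw [← Finset.sum_mul, hπ1, one_mul]
  · rintro ⟨hφ0, hsum⟩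
    classical
    set x : Fin K → ℝ := fun k => φ k / φbar k with hxdef
    have hx0 : ∀ k, 0 ≤ x k := fun k => div_nonneg (hφ0 k) (hφbar k).le
    set M : Fin L → ℝ := fun l => (univ.filter (fun k => parts k = l)).sup' (by
        obtain ⟨k, hk⟩ := hsurj l
        exact ⟨k, by simp [hk]⟩) (fun k => x k) with hMdef
    have hxM : ∀ k, x k ≤ M (parts k) := fun k => Finset.le_sup' _ (by simp)
    have hM0 : ∀ l, 0 ≤ M l := by
      intro l
      obtain ⟨k, hk⟩ := hsurj l
      exact le_trans (hx0 k) (hk ▸ hxM k)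
    have hMJ : ∑ l, M l ≤ (J : ℝ) := hsum
    set M' : ℕ → ℝ := fun i => if h : i < L then M ⟨i, h⟩ else 0 with hM'def
    have hM'0 : ∀ i, 0 ≤ M' i := by
      intro i; simp only [hM'def]; split
      · exact hM0 _
      · exact le_rfl
    set P : ℕ → ℝ := fun i => ∑ j ∈ Finset.range i, M' j with hPdef
    have hPmono : Monotone P := by
      intro i j hij
      exact Finset.sum_le_sum_of_subset_of_nonneg (Finset.range_subset_range.2 hij)
        (fun i _ _ => hM'0 i)
    have hP0 : ∀ i, 0 ≤ P i := fun i => Finset.sum_nonneg fun j _ => hM'0 j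
    have hPL : P L ≤ (J : ℝ) := by
      have : P L = ∑ l : Fin L, M l := by
        rw [show P L = ∑ j ∈ Finset.range L, M' j from rfl,
          ← Fin.sum_univ_eq_sum_range (fun i => M' i) L]
        apply Finset.sum_congr rfl
        intro l _
        simp [hM'def, l.isLt]
      rw [this]; exact hMJ
    have hPsucc : ∀ l : Fin L, P ((l : ℕ) + 1) = P (l : ℕ) + M l := by
      intro l
      simp only [hPdef, Finset.sum_range_succ]
      congr 1
      simp [hM'def, l.isLt]
    set a : Fin K → ℝ := fun k => P (parts k) with hadef
    set b : Fin K → ℝ := fun k => a k + x k with hbdef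
    have hab : ∀ k, a k ≤ b k := fun k => by
      simp only [hbdef]; linarith [hx0 k]
    have hbP : ∀ k, b k ≤ P ((parts k : ℕ) + 1) := by
      intro k
      rw [hbdef, hPsucc (parts k)]
      simp only [hadef]
      linarith [hxM k]
    set g : ℝ → Fin K → ℕ := fun u k => (⌈b k - u⌉ - ⌈a k - u⌉).toNat with hgdef
    have hgz : ∀ u k, ((g u k : ℤ)) = ⌈b k - u⌉ - ⌈a k - u⌉ := by
      intro u k
      exact Int.toNat_of_nonneg (sub_nonneg.2 (Int.ceil_le_ceil (by linarith [hab k])))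
    -- feasibility
    have hfeas : ∀ u ∈ Set.Ico (0:ℝ) 1, g u ∈ Y := by
      intro u hu
      rw [hY]
      refine ⟨fun l => (⌈P ((l : ℕ) + 1) - u⌉ - ⌈P (l : ℕ) - u⌉).toNat, ?_, ?_⟩
      · have hnn : ∀ l : Fin L, (0:ℤ) ≤ ⌈P ((l : ℕ) + 1) - u⌉ - ⌈P (l : ℕ) - u⌉ := by
          intro l
          exact sub_nonneg.2 (Int.ceil_le_ceil (by linarith [hPmono (Nat.le_succ (l : ℕ))]))
        have hcast : ((∑ l : Fin L, (⌈P ((l : ℕ) + 1) - u⌉ - ⌈P (l : ℕ) - u⌉).toNat : ℕ) : ℤ)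
            = ∑ l : Fin L, (⌈P ((l : ℕ) + 1) - u⌉ - ⌈P (l : ℕ) - u⌉) := by
          push_cast
          apply Finset.sum_congr rfl
          intro l _
          exact Int.toNat_of_nonneg (hnn l)
        have htel : ∑ l : Fin L, (⌈P ((l : ℕ) + 1) - u⌉ - ⌈P (l : ℕ) - u⌉)
            = ⌈P L - u⌉ - ⌈P 0 - u⌉ := by
          rw [Fin.sum_univ_eq_sum_range (fun i => ⌈P (i + 1) - u⌉ - ⌈P i - u⌉) L]
          exact Finset.sum_range_sub (fun i => ⌈P i - u⌉) L
        have hP0' : ⌈P 0 - u⌉ = 0 := by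
          rw [Int.ceil_eq_iff]
          constructor
          · simp only [Int.cast_zero]
            simp only [hPdef, Finset.range_zero, Finset.sum_empty]
            linarith [hu.2]
          · simp only [Int.cast_zero]
            simp only [hPdef, Finset.range_zero, Finset.sum_empty]
            linarith [hu.1]
        have hceilJ : ⌈P L - u⌉ ≤ (J : ℤ) := by
          apply Int.ceil_le.2
          push_cast
          linarith [hu.1, hPL]
        have : ((∑ l : Fin L, (⌈P ((l : ℕ) + 1) - u⌉ - ⌈P (l : ℕ) - u⌉).toNat : ℕ) : ℤ) ≤ (J : ℤ) := by
          rw [hcast, htel, hP0']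
          omega
        exact_mod_cast this
      · intro k
        apply Int.toNat_le_toNat
        have h1 : ⌈b k - u⌉ ≤ ⌈P ((parts k : ℕ) + 1) - u⌉ :=
          Int.ceil_le_ceil (by linarith [hbP k])
        have h2 : ⌈a k - u⌉ = ⌈P (parts k : ℕ) - u⌉ := rfl
        omega
    -- measurability
    have hgm : ∀ k, Measurable (fun u : ℝ => g u k) := by
      intro k
      have m1 : Measurable fun u : ℝ => ⌈b k - u⌉ :=
        Int.measurable_ceil.comp (measurable_const.sub measurable_id)
      have m2 : Measurable fun u : ℝ => ⌈a k - u⌉ :=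
        Int.measurable_ceil.comp (measurable_const.sub measurable_id)
      exact (measurable_from_top : Measurable Int.toNat).comp (m1.sub m2)
    set A : (Fin K → ℕ) → Set ℝ := fun y => {u | u ∈ Set.Ico (0:ℝ) 1 ∧ g u = y} with hAdef
    have hAeq : ∀ y, A y = Set.Ico (0:ℝ) 1 ∩ ⋂ k, {u : ℝ | g u k = y k} := by
      intro y
      ext u
      simp [hAdef, funext_iff, Set.mem_iInter]
    have hAm : ∀ y, MeasurableSet (A y) := by
      intro y
      rw [hAeq]
      exact measurableSet_Ico.inter (MeasurableSet.iInter fun k =>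
        (hgm k) (measurableSet_singleton (y k)))
    have hAdisj : (↑Y : Set (Fin K → ℕ)).PairwiseDisjoint A := by
      intro y _ y' _ hne
      apply Set.disjoint_left.2
      rintro u ⟨_, h1⟩ ⟨_, h2⟩
      exact hne (h1 ▸ h2 ▸ rfl)
    have hAcover : ⋃ y ∈ Y, A y = Set.Ico (0:ℝ) 1 := by
      ext u
      simp only [Set.mem_iUnion, hAdef, Set.mem_setOf_eq]
      constructor
      · rintro ⟨y, _, hu, _⟩; exact hu
      · intro hu; exact ⟨g u, hfeas u hu, hu, rfl⟩
    have hAfin : ∀ y, volume (A y) ≠ ⊤ := by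
      intro y
      have : volume (A y) ≤ volume (Set.Ico (0:ℝ) 1) := by
        apply measure_mono
        rw [hAeq]; exact Set.inter_subset_left
      simp only [Real.volume_Ico] at this
      exact ne_top_of_le_ne_top (by simp) this
    refine ⟨fun y => (volume (A y)).toReal, fun y _ => ENNReal.toReal_nonneg, ?_, ?_⟩
    · rw [← ENNReal.toReal_sum (fun y _ => hAfin y),
        ← measure_biUnion_finset hAdisj (fun y _ => hAm y), hAcover]
      simp [Real.volume_Ico]
    · intro k
      have hconst : ∀ u, ((g u k : ℕ) : ℝ) = ((⌈b k - u⌉ : ℤ) : ℝ) - ((⌈a k - u⌉ : ℤ) : ℝ) := by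
        intro u
        exact_mod_cast hgz u k
      have hint : ∀ y ∈ Y, ∫ u in A y, ((g u k : ℕ) : ℝ) = (volume (A y)).toReal * (y k : ℝ) := by
        intro y _
        rw [setIntegral_congr_fun (hAm y) (g := fun _ => ((y k : ℕ) : ℝ))
          (fun u hu => by rw [hu.2])]
        rw [setIntegral_const, smul_eq_mul]
        rfl
      have hintegrable : ∀ y ∈ Y, IntegrableOn (fun u => ((g u k : ℕ) : ℝ)) (A y) volume := by
        intro y _
        apply (integrableOn_const (hAfin y) enorm_ne_top).congr
          (g := fun u => ((g u k : ℕ) : ℝ)) (f := fun _ => ((y k : ℕ) : ℝ))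
        exact (ae_restrict_iff' (hAm y)).2
          (Filter.Eventually.of_forall fun u hu => by
            show ((y k : ℕ) : ℝ) = ((g u k : ℕ) : ℝ)
            rw [hu.2])
      have hsum_int : ∑ y ∈ Y, (volume (A y)).toReal * (y k : ℝ)
          = ∫ u in Set.Ico (0:ℝ) 1, ((g u k : ℕ) : ℝ) := by
        rw [← hAcover, integral_biUnion_finset Y (fun y _ => hAm y) hAdisj hintegrable]
        exact (Finset.sum_congr rfl hint).symm
      have hIco : ∫ u in Set.Ico (0:ℝ) 1, ((g u k : ℕ) : ℝ) = x k := by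
        rw [integral_Ico_eq_integral_Ioo, ← integral_Ioc_eq_integral_Ioo,
          ← intervalIntegral.integral_of_le zero_le_one]
        have : ∀ u : ℝ, ((g u k : ℕ) : ℝ) = ((⌈b k - u⌉ : ℤ) : ℝ) - ((⌈a k - u⌉ : ℤ) : ℝ) := hconst
        rw [intervalIntegral.integral_congr (fun u _ => this u)]
        rw [intervalIntegral.integral_sub (ceil_intervalIntegrable _ _ _)
          (ceil_intervalIntegrable _ _ _), ceil_integral, ceil_integral]
        simp [hbdef]
      rw [hsum_int, hIco]
      show φ k = φbar k * (φ k / φbar k)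
      rw [mul_comm, div_mul_cancel₀ _ (hφbar k).ne']
end

section
/- Uniform weight approximation: there exists a constant m > 0 (depending on J, K, and β) such that for all x ∈ ℕ^K and all feasible schedules y ∈ Y(x), m·u(x,y) ≤ w(x,y) ≤ u(x,y), where w(x,y) = Π_{k:x_k>0} (x_k!/(x_k−y_k)!)·α_k^{y_k}·Π_j β_{kj}^{y_{kj}} and u(x,y) = Π_{k:x_k>0} (x_k α_k)^{y_k}. -/
open Finset

lemma pow_le_factorial_mul_descFactorial' (x : ℕ) : ∀ n : ℕ, n ≤ x →
    x ^ n ≤ n.factorial * x.descFactorial n := by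
  intro n
  induction n with
  | zero => simp
  | succ n ih =>
    intro h
    have hn : n ≤ x := Nat.le_of_succ_le h
    have h1 : x ≤ (n + 1) * (x - n) := by
      obtain ⟨t, rfl⟩ := Nat.exists_eq_add_of_le h
      have ht : n + 1 + t - n = 1 + t := by omega
      rw [ht]; nlinarith
    calc x ^ (n + 1) = x ^ n * x := by ring
      _ ≤ (n.factorial * x.descFactorial n) * ((n + 1) * (x - n)) :=
          Nat.mul_le_mul (ih hn) h1
      _ = (n + 1).factorial * x.descFactorial (n + 1) := by
          rw [Nat.factorial_succ, Nat.descFactorial_succ]; ring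

/-- Uniform weight approximation (Lemma 1, first part): there is a constant
`m > 0` such that `m·u(x,y) ≤ w(x,y) ≤ u(x,y)` for every state `x` and every
feasible schedule `y`, where
`w(x,y) = ∏_{k:x_k>0} (x_k!/(x_k−y_k)!) α_k^{y_k} ∏_j β_{kj}^{y_{kj}}` and
`u(x,y) = ∏_{k:x_k>0} (x_k α_k)^{y_k}`. -/
theorem csma_weight_uniform_approximation (K J : ℕ) (hK : 0 < K) (hJ : 0 < J)
    (α : Fin K → ℝ) (hα : ∀ k, 0 < α k)
    (β : Fin K → Fin J → ℝ) (hβ01 : ∀ k j, 0 ≤ β k j ∧ β k j ≤ 1)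
    (hβsum : ∀ k, ∑ j, β k j = 1)
    -- accessible channels: those probed with positive probability
    (V : Fin K → Finset (Fin J)) (hVne : ∀ k, (V k).Nonempty)
    (hV : ∀ k j, j ∈ V k ↔ 0 < β k j)
    (w u : (Fin K → ℕ) → (Fin K → Fin J → ℕ) → ℝ)
    (hw : ∀ x y, w x y = ∏ k, if 0 < x k then
      ((x k).descFactorial (∑ j, y k j) : ℝ) * α k ^ (∑ j, y k j) *
        ∏ j, β k j ^ y k j else 1)
    (hu : ∀ x y, u x y = ∏ k, if 0 < x k then
      ((x k : ℝ) * α k) ^ (∑ j, y k j) else 1) :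
    ∃ m : ℝ, 0 < m ∧
      ∀ (x : Fin K → ℕ) (y : Fin K → Fin J → ℕ),
        (∀ k j, y k j ≤ 1) → (∀ k, (∑ j, y k j) ≤ x k) →
        (∀ k j, y k j = 1 → j ∈ V k) →
        m * u x y ≤ w x y ∧ w x y ≤ u x y := by
  have hβ0 : ∀ k j, (0:ℝ) ≤ β k j := fun k j => (hβ01 k j).1
  have hβ1 : ∀ k j, β k j ≤ 1 := fun k j => (hβ01 k j).2
  have hKne : (univ : Finset (Fin K)).Nonempty := ⟨⟨0, hK⟩, mem_univ _⟩
  set b : ℝ := univ.inf' hKne (fun k => (V k).inf' (hVne k) (β k)) with hbdef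
  have hb_pos : 0 < b := by
    rw [hbdef, Finset.lt_inf'_iff]
    intro k _
    rw [Finset.lt_inf'_iff]
    intro j hj
    exact (hV k j).mp hj
  have hb_le : ∀ k j, j ∈ V k → b ≤ β k j := by
    intro k j hj
    calc b ≤ (V k).inf' (hVne k) (β k) := Finset.inf'_le _ (mem_univ k)
      _ ≤ β k j := Finset.inf'_le _ hj
  have hb_le1 : b ≤ 1 := by
    obtain ⟨j, hj⟩ := hVne ⟨0, hK⟩
    exact le_trans (hb_le _ _ hj) (hβ1 _ _)
  have hJfac : (0:ℝ) < (J.factorial : ℝ) := by positivity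
  refine ⟨(b ^ J / (J.factorial : ℝ)) ^ K, by positivity, ?_⟩
  intro x y hy1 hyx hyV
  have hykJ : ∀ k, (∑ j, y k j) ≤ J := by
    intro k
    calc (∑ j, y k j) ≤ ∑ _j : Fin J, 1 := Finset.sum_le_sum (fun j _ => hy1 k j)
      _ = J := by simp
  constructor
  · -- lower bound
    rw [hw, hu]
    have hrw : ((b ^ J / (J.factorial : ℝ)) ^ K) *
        ∏ k, (if 0 < x k then ((x k : ℝ) * α k) ^ (∑ j, y k j) else 1)
        = ∏ k, ((b ^ J / (J.factorial : ℝ)) *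
          if 0 < x k then ((x k : ℝ) * α k) ^ (∑ j, y k j) else 1) := by
      rw [Finset.prod_mul_distrib, Finset.prod_const, Finset.card_univ, Fintype.card_fin]
    rw [hrw]
    apply Finset.prod_le_prod
    · intro k _
      apply mul_nonneg (by positivity)
      split
      · exact pow_nonneg (mul_nonneg (Nat.cast_nonneg _) (hα k).le) _
      · norm_num
    · intro k _
      by_cases hx : 0 < x k
      · simp only [if_pos hx]
        have hdesc : ((x k : ℝ)) ^ (∑ j, y k j) ≤
            (J.factorial : ℝ) * ((x k).descFactorial (∑ j, y k j) : ℝ) := by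
          have h1 := pow_le_factorial_mul_descFactorial' (x k) _ (hyx k)
          have h2 : (∑ j, y k j).factorial * (x k).descFactorial (∑ j, y k j)
              ≤ J.factorial * (x k).descFactorial (∑ j, y k j) :=
            Nat.mul_le_mul_right _ (Nat.factorial_le (hykJ k))
          exact_mod_cast le_trans h1 h2
        have hβprod : b ^ J ≤ ∏ j, β k j ^ y k j := by
          calc b ^ J = ∏ _j : Fin J, b := by
                rw [Finset.prod_const, Finset.card_univ, Fintype.card_fin]
            _ ≤ ∏ j, β k j ^ y k j := by
                apply Finset.prod_le_prod (fun j _ => hb_pos.le)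
                intro j _
                rcases Nat.le_one_iff_eq_zero_or_eq_one.mp (hy1 k j) with h | h
                · rw [h, pow_zero]; exact hb_le1
                · rw [h, pow_one]; exact hb_le k j (hyV k j h)
        have hxn : (0:ℝ) ≤ (x k : ℝ) ^ (∑ j, y k j) := by positivity
        have hαn : (0:ℝ) ≤ α k ^ (∑ j, y k j) := pow_nonneg (hα k).le _
        calc b ^ J / (J.factorial : ℝ) * ((x k : ℝ) * α k) ^ (∑ j, y k j)
            = ((x k : ℝ) ^ (∑ j, y k j) / (J.factorial : ℝ)) * α k ^ (∑ j, y k j) * b ^ J := by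
              rw [mul_pow]; ring
          _ ≤ (((J.factorial : ℝ) * ((x k).descFactorial (∑ j, y k j) : ℝ)) / (J.factorial : ℝ))
              * α k ^ (∑ j, y k j) * (∏ j, β k j ^ y k j) := by
              gcongr
          _ = ((x k).descFactorial (∑ j, y k j) : ℝ) * α k ^ (∑ j, y k j)
              * (∏ j, β k j ^ y k j) := by
              field_simp
      · simp only [if_neg hx, mul_one]
        rw [div_le_one hJfac]
        calc b ^ J ≤ 1 := pow_le_one₀ hb_pos.le hb_le1
          _ ≤ (J.factorial : ℝ) := by exact_mod_cast Nat.one_le_iff_ne_zero.mpr J.factorial_ne_zero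
  · -- upper bound
    rw [hw, hu]
    apply Finset.prod_le_prod
    · intro k _
      split
      · exact mul_nonneg (mul_nonneg (Nat.cast_nonneg _) (pow_nonneg (hα k).le _))
          (Finset.prod_nonneg (fun j _ => pow_nonneg (hβ0 k j) _))
      · norm_num
    · intro k _
      by_cases hx : 0 < x k
      · simp only [if_pos hx]
        have h1 : ((x k).descFactorial (∑ j, y k j) : ℝ) ≤ (x k : ℝ) ^ (∑ j, y k j) := by
          exact_mod_cast Nat.descFactorial_le_pow _ _
        have h2 : (∏ j, β k j ^ y k j) ≤ 1 :=
          Finset.prod_le_one (fun j _ => pow_nonneg (hβ0 k j) _)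
            (fun j _ => pow_le_one₀ (hβ0 k j) (hβ1 k j))
        have hp : (0:ℝ) ≤ ∏ j, β k j ^ y k j :=
          Finset.prod_nonneg (fun j _ => pow_nonneg (hβ0 k j) _)
        have hαn : (0:ℝ) ≤ α k ^ (∑ j, y k j) := pow_nonneg (hα k).le _
        calc ((x k).descFactorial (∑ j, y k j) : ℝ) * α k ^ (∑ j, y k j)
              * (∏ j, β k j ^ y k j)
            ≤ ((x k : ℝ) ^ (∑ j, y k j) * α k ^ (∑ j, y k j)) * 1 := by
              apply mul_le_mul _ h2 hp (mul_nonneg (pow_nonneg (Nat.cast_nonneg _) _) hαn)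
              exact mul_le_mul_of_nonneg_right h1 hαn
          _ = ((x k : ℝ) * α k) ^ (∑ j, y k j) := by rw [mul_one, mul_pow]
      · simp [hx]
end
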